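/- Let x ∈ ℝ^d be a nonzero vector and β > 0. Then the function g(Σ) := (xᵀ Σ^{-1} x)^β is convex on the set of symmetric positive definite d×d matrices (with respect to Euclidean line segments), being the composition g = exp(β · ℓ) where ℓ(Σ) = log(xᵀΣ^{-1}x) is convex and t ↦ exp(βt) is convex and increasing. -/

import Mathlib

open Matrix

variable {d : ℕ}

lemma posdef_smul' {c : ℝ} (hc : 0 < c) {A : Matrix (Fin d) (Fin d) ℝ} (hA : A.PosDef) :
    (c • A).PosDef := by
  refine PosDef.of_dotProduct_mulVec_pos ?_ ?_
  · show (c • A)ᴴ = c • A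
    rw [conjTranspose_smul, hA.1.eq, star_trivial]
  · intro y hy
    rw [star_trivial, smul_mulVec, dotProduct_smul, smul_eq_mul]
    exact mul_pos hc (by simpa using hA.dotProduct_mulVec_pos hy)

lemma combo_posdef {S₀ S₁ : Matrix (Fin d) (Fin d) ℝ} (h₀ : S₀.PosDef) (h₁ : S₁.PosDef)
    {a b : ℝ} (ha : 0 < a) (hb : 0 < b) : (a • S₀ + b • S₁).PosDef :=
  (posdef_smul' ha h₀).add (posdef_smul' hb h₁)

lemma cs' (x y : Fin d → ℝ) {S : Matrix (Fin d) (Fin d) ℝ} (hS : S.PosDef) :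
    (x ⬝ᵥ y) ^ 2 ≤ (x ⬝ᵥ S⁻¹ *ᵥ x) * (y ⬝ᵥ S *ᵥ y) := by
  have hinv : S * S⁻¹ = 1 := mul_nonsing_inv _ (isUnit_iff_isUnit_det _ |>.1 hS.isUnit)
  have hTS : Sᵀ = S := hS.isHermitian
  set u := S⁻¹ *ᵥ x with hu
  have hSu : S *ᵥ u = x := by rw [hu, mulVec_mulVec, hinv, one_mulVec]
  have hsym : ∀ v w : Fin d → ℝ, v ⬝ᵥ S *ᵥ w = (S *ᵥ v) ⬝ᵥ w := by
    intro v w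
    rw [dotProduct_mulVec, ← mulVec_transpose, hTS]
  have h1 : u ⬝ᵥ S *ᵥ y = x ⬝ᵥ y := by rw [hsym, hSu]
  have h2 : y ⬝ᵥ S *ᵥ u = x ⬝ᵥ y := by rw [hSu, dotProduct_comm]
  have huu : u ⬝ᵥ S *ᵥ u = x ⬝ᵥ u := by rw [hsym, hSu]
  have key : ∀ t : ℝ, 0 ≤ (x ⬝ᵥ u) * (t * t) + (2 * (x ⬝ᵥ y)) * t + (y ⬝ᵥ S *ᵥ y) := by
    intro t
    have h0 : 0 ≤ (t • u + y) ⬝ᵥ S *ᵥ (t • u + y) := by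
      have := hS.posSemidef.dotProduct_mulVec_nonneg (t • u + y); rwa [star_trivial] at this
    simp only [mulVec_add, mulVec_smul, dotProduct_add, add_dotProduct, dotProduct_smul,
      smul_dotProduct, smul_eq_mul, h1, h2, huu] at h0
    nlinarith [h0]
  have hd := discrim_le_zero key
  rw [discrim] at hd
  nlinarith [hd]

-- log-convexity step: f(aS₀+bS₁) ≤ f₀^a * f₁^b
lemma log_convex_step (x : Fin d → ℝ) (hx : x ≠ 0) {S₀ S₁ : Matrix (Fin d) (Fin d) ℝ}
    (h₀ : S₀.PosDef) (h₁ : S₁.PosDef) {a b : ℝ} (ha : 0 < a) (hb : 0 < b) (hab : a + b = 1) :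
    x ⬝ᵥ (a • S₀ + b • S₁)⁻¹ *ᵥ x ≤
      (x ⬝ᵥ S₀⁻¹ *ᵥ x) ^ a * (x ⬝ᵥ S₁⁻¹ *ᵥ x) ^ b := by
  have hT := combo_posdef h₀ h₁ ha hb
  set T := a • S₀ + b • S₁ with hTdef
  set y := T⁻¹ *ᵥ x with hy
  have hft : 0 < x ⬝ᵥ y := (by simpa using hT.inv.dotProduct_mulVec_pos hx)
  have hTy : T *ᵥ y = x := by
    rw [hy, mulVec_mulVec, mul_nonsing_inv _ (isUnit_iff_isUnit_det _ |>.1 hT.isUnit), one_mulVec]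
  have hy0 : y ≠ 0 := by
    intro h
    apply hx
    rw [← hTy, h, mulVec_zero]
  have hA : 0 < y ⬝ᵥ S₀ *ᵥ y := (by simpa using h₀.dotProduct_mulVec_pos hy0)
  have hB : 0 < y ⬝ᵥ S₁ *ᵥ y := (by simpa using h₁.dotProduct_mulVec_pos hy0)
  set A := y ⬝ᵥ S₀ *ᵥ y
  set B := y ⬝ᵥ S₁ *ᵥ y
  have hcomb : a * A + b * B = x ⬝ᵥ y := by
    have : y ⬝ᵥ T *ᵥ y = x ⬝ᵥ y := by rw [hTy, dotProduct_comm]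
    rw [← this, hTdef, add_mulVec, dotProduct_add, smul_mulVec, smul_mulVec,
      dotProduct_smul, dotProduct_smul, smul_eq_mul, smul_eq_mul]
  have cs₀ : (x ⬝ᵥ y) ^ 2 ≤ (x ⬝ᵥ S₀⁻¹ *ᵥ x) * A := cs' x y h₀
  have cs₁ : (x ⬝ᵥ y) ^ 2 ≤ (x ⬝ᵥ S₁⁻¹ *ᵥ x) * B := cs' x y h₁
  set f₀ := x ⬝ᵥ S₀⁻¹ *ᵥ x
  set f₁ := x ⬝ᵥ S₁⁻¹ *ᵥ x
  have hf₀ : 0 < f₀ := (by simpa using h₀.inv.dotProduct_mulVec_pos hx)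
  have hf₁ : 0 < f₁ := (by simpa using h₁.inv.dotProduct_mulVec_pos hx)
  -- geometric-arithmetic: A^a * B^b ≤ a*A + b*B = x ⬝ᵥ y
  have gm : A ^ a * B ^ b ≤ x ⬝ᵥ y := by
    rw [← hcomb]
    exact Real.geom_mean_le_arith_mean2_weighted ha.le hb.le hA.le hB.le hab
  -- (x⬝ᵥy)^2 ≤ f₀^a f₁^b A^a B^b
  have sq : (x ⬝ᵥ y) * (x ⬝ᵥ y) ≤ (f₀ ^ a * f₁ ^ b) * (A ^ a * B ^ b) := by
    have e : (x ⬝ᵥ y) * (x ⬝ᵥ y) = ((x ⬝ᵥ y)^2) ^ a * ((x ⬝ᵥ y)^2) ^ b := by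
      rw [← Real.rpow_add (by positivity), hab, Real.rpow_one, sq]
    rw [e]
    calc ((x ⬝ᵥ y)^2) ^ a * ((x ⬝ᵥ y)^2) ^ b
        ≤ (f₀ * A) ^ a * (f₁ * B) ^ b := by
          gcongr <;> positivity
      _ = (f₀ ^ a * f₁ ^ b) * (A ^ a * B ^ b) := by
          rw [Real.mul_rpow hf₀.le hA.le, Real.mul_rpow hf₁.le hB.le]; ring
  have hfpos : 0 < f₀ ^ a * f₁ ^ b := by positivity
  have : (x ⬝ᵥ y) * (x ⬝ᵥ y) ≤ (f₀ ^ a * f₁ ^ b) * (x ⬝ᵥ y) := by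
    calc (x ⬝ᵥ y) * (x ⬝ᵥ y) ≤ (f₀ ^ a * f₁ ^ b) * (A ^ a * B ^ b) := sq
      _ ≤ (f₀ ^ a * f₁ ^ b) * (x ⬝ᵥ y) := by gcongr
  exact le_of_mul_le_mul_right (by linarith [this]) hft

/-- Euclidean convexity of `Σ ↦ (xᵀ S⁻¹ x)^β` on the positive definite cone. -/
theorem matrix_fractional_rpow_convexOn {d : ℕ} (x : Fin d → ℝ)
    (hx : x ≠ 0) (β : ℝ) (hβ : 0 < β) :
    ConvexOn ℝ {S : Matrix (Fin d) (Fin d) ℝ | S.PosDef}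
      (fun S => (x ⬝ᵥ S⁻¹ *ᵥ x) ^ β) := by
  constructor
  · intro S₀ h₀ S₁ h₁ a b ha hb hab
    rcases eq_or_lt_of_le ha with rfl | ha'
    · simp only [zero_add] at hab; subst hab; simpa using h₁
    rcases eq_or_lt_of_le hb with rfl | hb'
    · simp only [add_zero] at hab; subst hab; simpa using h₀
    exact combo_posdef h₀ h₁ ha' hb'
  · intro S₀ h₀ S₁ h₁ a b ha hb hab
    rcases eq_or_lt_of_le ha with rfl | ha'
    · simp only [zero_add] at hab; subst hab; simp
    rcases eq_or_lt_of_le hb with rfl | hb'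
    · simp only [add_zero] at hab; subst hab; simp
    simp only [Set.mem_setOf_eq] at h₀ h₁
    have hf₀ : 0 < x ⬝ᵥ S₀⁻¹ *ᵥ x := (by simpa using h₀.inv.dotProduct_mulVec_pos hx)
    have hf₁ : 0 < x ⬝ᵥ S₁⁻¹ *ᵥ x := (by simpa using h₁.inv.dotProduct_mulVec_pos hx)
    have hT := combo_posdef h₀ h₁ ha' hb'
    have step := log_convex_step x hx h₀ h₁ ha' hb' hab
    have hft : 0 < x ⬝ᵥ (a • S₀ + b • S₁)⁻¹ *ᵥ x := (by simpa using hT.inv.dotProduct_mulVec_pos hx)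
    calc (x ⬝ᵥ (a • S₀ + b • S₁)⁻¹ *ᵥ x) ^ β
        ≤ ((x ⬝ᵥ S₀⁻¹ *ᵥ x) ^ a * (x ⬝ᵥ S₁⁻¹ *ᵥ x) ^ b) ^ β :=
          Real.rpow_le_rpow hft.le step hβ.le
      _ = ((x ⬝ᵥ S₀⁻¹ *ᵥ x) ^ β) ^ a * ((x ⬝ᵥ S₁⁻¹ *ᵥ x) ^ β) ^ b := by
          rw [Real.mul_rpow (by positivity) (by positivity),
            ← Real.rpow_mul hf₀.le, ← Real.rpow_mul hf₁.le,
            ← Real.rpow_mul hf₀.le, ← Real.rpow_mul hf₁.le, mul_comm a β, mul_comm b β]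
      _ ≤ a * (x ⬝ᵥ S₀⁻¹ *ᵥ x) ^ β + b * (x ⬝ᵥ S₁⁻¹ *ᵥ x) ^ β :=
          Real.geom_mean_le_arith_mean2_weighted ha hb (by positivity) (by positivity) hab
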